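/- Let G be an (n+p+2)-closed balanced bipartite graph of order 2n with parts of size n, minimum degree δ(G) ≥ k, where k ≥ p ≥ 0 and n ≥ 2k − p + 2. If e(G) > n(n−k+p−1) + (k+2)(k−p+1), then K_{n,n−k+p} is a subgraph of G, or k = p + 2 and G is isomorphic to N_{n,n}^{p,1} or N_{n,n}^{p,2}. -/

import Mathlib

/-- Bipartite graph on `α ⊕ β` determined by a cross relation. -/
def crossGraph {α β : Type*} (r : α → β → Prop) : SimpleGraph (α ⊕ β) where
  Adj u v := match u, v with
    | Sum.inl i, Sum.inr j => r i j
    | Sum.inr j, Sum.inl i => r i j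
    | _, _ => False
  symm := ⟨by rintro (i|i) (j|j) h <;> first | exact h.elim | exact h⟩
  loopless := ⟨by rintro (i|i) h <;> exact h⟩

/-- Block class of an index: `1` for the first `a` indices, `2` for the next `b`, else `3`. -/
def nClass (a b : ℕ) (i : ℕ) : ℕ := if i < a then 1 else if i < a + b then 2 else 3

/-- The graph `N_{n,n}^{p,1}`: blocks of sizes `n-p-2`, `p+1`, `1` on each side; a cross pair
is adjacent unless its classes are `{1,3}`. -/
def Ngraph1 (n p : ℕ) : SimpleGraph (Fin n ⊕ Fin n) :=
  crossGraph (fun i j =>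
    ¬(nClass (n-p-2) (p+1) (i:ℕ) = 1 ∧ nClass (n-p-2) (p+1) (j:ℕ) = 3) ∧
    ¬(nClass (n-p-2) (p+1) (i:ℕ) = 3 ∧ nClass (n-p-2) (p+1) (j:ℕ) = 1))

/-- The graph `N_{n,n}^{p,2}`: blocks of sizes `n-p-3`, `p+2`, `1` on each side; a cross pair
is adjacent unless its classes are `{1,3}` or `{3,3}`. -/
def Ngraph2 (n p : ℕ) : SimpleGraph (Fin n ⊕ Fin n) :=
  crossGraph (fun i j =>
    ¬(nClass (n-p-3) (p+2) (i:ℕ) = 1 ∧ nClass (n-p-3) (p+2) (j:ℕ) = 3) ∧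
    ¬(nClass (n-p-3) (p+2) (i:ℕ) = 3 ∧ nClass (n-p-3) (p+2) (j:ℕ) = 1) ∧
    ¬(nClass (n-p-3) (p+2) (i:ℕ) = 3 ∧ nClass (n-p-3) (p+2) (j:ℕ) = 3))


lemma nClass_eq1 (c1 c2 m : ℕ) : nClass c1 c2 m = 1 ↔ m < c1 := by
  unfold nClass
  split_ifs <;> omega

lemma nClass_eq3 (c1 c2 m : ℕ) : nClass c1 c2 m = 3 ↔ c1 + c2 ≤ m := by
  unfold nClass
  split_ifs <;> omega


lemma blockEquiv {V : Type*} [DecidableEq V] (A F1 F2 F3 : Finset V) (c1 c2 c3 : ℕ)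
    (h13 : Disjoint F1 F3) (h23 : Disjoint F2 F3) (h12 : Disjoint F1 F2)
    (hu : F1 ∪ F2 ∪ F3 = A)
    (hc1 : F1.card = c1) (hc2 : F2.card = c2) (hc3 : F3.card = c3) :
    ∃ g : {v // v ∈ A} ≃ Fin (c1 + c2 + c3), ∀ v : {v // v ∈ A},
      (v.1 ∈ F1 ↔ ((g v : ℕ) < c1)) ∧ (v.1 ∈ F3 ↔ (c1 + c2 ≤ (g v : ℕ))) := by
  classical
  have e1 := Finset.equivFinOfCardEq hc1
  have e2 := Finset.equivFinOfCardEq hc2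
  have e3 := Finset.equivFinOfCardEq hc3
  have hmem : ∀ v : {v // v ∈ A}, v.1 ∈ F1 ∨ v.1 ∈ F2 ∨ v.1 ∈ F3 := by
    intro v
    have h' : v.1 ∈ F1 ∪ F2 ∪ F3 := by rw [hu]; exact v.2
    simp only [Finset.mem_union] at h'
    tauto
  set f : {v // v ∈ A} → Fin (c1 + c2 + c3) := fun v =>
    if h1 : v.1 ∈ F1 then ⟨e1 ⟨v.1, h1⟩, by have := (e1 ⟨v.1, h1⟩).2; omega⟩
    else if h2 : v.1 ∈ F2 then ⟨c1 + e2 ⟨v.1, h2⟩, by have := (e2 ⟨v.1, h2⟩).2; omega⟩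
    else ⟨c1 + c2 + e3 ⟨v.1, (hmem v).resolve_left h1 |>.resolve_left h2⟩, by
      have := (e3 ⟨v.1, (hmem v).resolve_left h1 |>.resolve_left h2⟩).2; omega⟩
  have hf1 : ∀ v, v.1 ∈ F1 → ((f v : ℕ) < c1) := by
    intro v h1
    simp only [f, dif_pos h1]
    exact (e1 ⟨v.1, h1⟩).2
  have hf2 : ∀ v (h : v.1 ∈ F2), (f v : ℕ) = c1 + e2 ⟨v.1, h⟩ := by
    intro v h2
    have h1 : v.1 ∉ F1 := fun h1 => (Finset.disjoint_left.mp h12) h1 h2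
    simp only [f, dif_neg h1, dif_pos h2]
  have hf3 : ∀ v, v.1 ∈ F3 → (c1 + c2 ≤ (f v : ℕ)) := by
    intro v h3
    have h1 : v.1 ∉ F1 := fun h1 => (Finset.disjoint_left.mp h13) h1 h3
    have h2 : v.1 ∉ F2 := fun h2 => (Finset.disjoint_left.mp h23) h2 h3
    simp only [f, dif_neg h1, dif_neg h2]
    omega
  have hinj : Function.Injective f := by
    intro u v huv
    by_cases hu1 : u.1 ∈ F1 <;> by_cases hv1 : v.1 ∈ F1
    · -- both in F1
      simp only [f, dif_pos hu1, dif_pos hv1, Fin.mk.injEq] at huv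
      have : (⟨u.1, hu1⟩ : {x // x ∈ F1}) = ⟨v.1, hv1⟩ := e1.injective (Fin.val_injective huv)
      exact Subtype.ext (Subtype.mk_eq_mk.mp this)
    · exfalso
      have h1 := hf1 u hu1
      rcases (hmem v).resolve_left hv1 with hv2 | hv3
      · have := hf2 v hv2; omega
      · have := hf3 v hv3; rw [huv] at h1; omega
    · exfalso
      have h1 := hf1 v hv1
      rcases (hmem u).resolve_left hu1 with hu2 | hu3
      · have := hf2 u hu2; rw [huv] at this; omega
      · have := hf3 u hu3; rw [huv] at this; omega
    · rcases (hmem u).resolve_left hu1 with hu2 | hu3 <;>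
      rcases (hmem v).resolve_left hv1 with hv2 | hv3
      · have h2u := hf2 u hu2; have h2v := hf2 v hv2
        rw [huv] at h2u
        have : e2 ⟨u.1, hu2⟩ = e2 ⟨v.1, hv2⟩ := by
          apply Fin.val_injective; omega
        have := e2.injective this
        exact Subtype.ext (Subtype.mk_eq_mk.mp this)
      · have := hf2 u hu2; have h3 := hf3 v hv3
        have h2 := (e2 ⟨u.1, hu2⟩).2
        rw [huv] at this; omega
      · have := hf2 v hv2; have h3 := hf3 u hu3
        have h2 := (e2 ⟨v.1, hv2⟩).2
        rw [← huv] at this; omega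
      · have h3u : (f u : ℕ) = c1 + c2 + e3 ⟨u.1, hu3⟩ := by
          have h1 : u.1 ∉ F1 := hu1
          have h2 : u.1 ∉ F2 := fun h => (Finset.disjoint_left.mp h23) h hu3
          simp only [f, dif_neg h1, dif_neg h2]
        have h3v : (f v : ℕ) = c1 + c2 + e3 ⟨v.1, hv3⟩ := by
          have h1 : v.1 ∉ F1 := hv1
          have h2 : v.1 ∉ F2 := fun h => (Finset.disjoint_left.mp h23) h hv3
          simp only [f, dif_neg h1, dif_neg h2]
        rw [huv] at h3u
        have : e3 ⟨u.1, hu3⟩ = e3 ⟨v.1, hv3⟩ := by apply Fin.val_injective; omega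
        have := e3.injective this
        exact Subtype.ext (Subtype.mk_eq_mk.mp this)
  have hcardA : A.card = c1 + c2 + c3 := by
    rw [← hu]
    rw [Finset.card_union_of_disjoint (by
      exact Finset.disjoint_union_left.mpr ⟨h13, h23⟩),
      Finset.card_union_of_disjoint h12, hc1, hc2, hc3]
  have hbij : Function.Bijective f := by
    rw [Fintype.bijective_iff_injective_and_card]
    refine ⟨hinj, ?_⟩
    simp [Fintype.card_coe, hcardA]
  refine ⟨Equiv.ofBijective f hbij, fun v => ?_⟩
  have hval : ((Equiv.ofBijective f hbij) v : ℕ) = (f v : ℕ) := rfl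
  constructor
  · constructor
    · intro h; rw [hval]; exact hf1 v h
    · intro h
      rcases hmem v with h1 | h2 | h3
      · exact h1
      · have := hf2 v h2; rw [hval] at h; omega
      · have := hf3 v h3; rw [hval] at h
        omega
  · constructor
    · intro h; rw [hval]; exact hf3 v h
    · intro h
      rcases hmem v with h1 | h2 | h3
      · have := hf1 v h1; rw [hval] at h; omega
      · have := hf2 v h2; have := (e2 ⟨v.1, h2⟩).2; rw [hval] at h; omega
      · exact h3

lemma side_complete {V : Type*} [Fintype V] [DecidableEq V] (G : SimpleGraph V)
    [DecidableRel G.Adj] (X Y : Finset V) (n tt : ℕ) (hX : X.card = n) (hY : Y.card = n)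
    (hnbr : ∀ y ∈ Y, G.neighborFinset y ⊆ X)
    (hW : (Y.filter (fun y => 1 ≤ n - G.degree y)).card ≤ tt) (htn : tt ≤ n) :
    ∃ B, B ⊆ Y ∧ B.card = n - tt ∧ ∀ x ∈ X, ∀ b ∈ B, G.Adj x b := by
  classical
  set W := Y.filter (fun y => 1 ≤ n - G.degree y) with hWdef
  have hWY : W ⊆ Y := Finset.filter_subset _ _
  have hC : n - tt ≤ (Y \ W).card := by
    rw [Finset.card_sdiff_of_subset hWY, hY]; omega
  obtain ⟨B, hBC, hBcard⟩ := Finset.exists_subset_card_eq hC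
  refine ⟨B, hBC.trans (Finset.sdiff_subset), hBcard, ?_⟩
  intro x hx b hb
  have hbC := hBC hb
  rw [Finset.mem_sdiff] at hbC
  obtain ⟨hbY, hbW⟩ := hbC
  have hdeg : n ≤ G.degree b := by
    by_contra hlt
    exact hbW (Finset.mem_filter.mpr ⟨hbY, by omega⟩)
  have hsub := hnbr b hbY
  have hcard : X.card ≤ (G.neighborFinset b).card := by
    rw [SimpleGraph.card_neighborFinset_eq_degree, hX]; exact hdeg
  have heq : G.neighborFinset b = X := Finset.eq_of_subset_of_card_le hsub hcard
  have : x ∈ G.neighborFinset b := heq ▸ hx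
  exact (G.mem_neighborFinset b x).mp this |>.symm

lemma small_or_big {V : Type*} [Fintype V] [DecidableEq V] (G : SimpleGraph V)
    [DecidableRel G.Adj] (X Y : Finset V) (n a t : ℕ) (hY : Y.card = n)
    (hnbrX : ∀ x ∈ X, G.neighborFinset x ⊆ Y)
    (hcl : ∀ x ∈ X, ∀ y ∈ Y, ¬G.Adj x y → a + t + 1 ≤ (n - G.degree x) + (n - G.degree y))
    (hMY : ∑ y ∈ Y, (n - G.degree y) < a * (t + 1)) :
    ∀ v ∈ X, (n - G.degree v ≤ t) ∨ (a + 1 ≤ n - G.degree v) := by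
  classical
  intro v hv
  by_contra hcon
  push_neg at hcon
  obtain ⟨h1, h2⟩ := hcon
  set m := n - G.degree v with hm
  have hmt : t + 1 ≤ m := h1
  have hma : m ≤ a := by omega
  have hsub := hnbrX v hv
  set T := Y \ G.neighborFinset v with hT
  have hTcard : T.card = m := by
    rw [hT, Finset.card_sdiff_of_subset hsub, SimpleGraph.card_neighborFinset_eq_degree, hY]
  have hTbound : ∀ y ∈ T, a + t + 1 - m ≤ n - G.degree y := by
    intro y hy
    rw [Finset.mem_sdiff] at hy
    have hnadj : ¬G.Adj v y := by
      intro hadj; exact hy.2 ((G.mem_neighborFinset v y).mpr hadj)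
    have := hcl v hv y hy.1 hnadj
    omega
  have hsum1 : T.card * (a + t + 1 - m) ≤ ∑ y ∈ T, (n - G.degree y) := by
    simpa using Finset.card_nsmul_le_sum T (fun y => n - G.degree y) (a + t + 1 - m) hTbound
  have hsum2 : ∑ y ∈ T, (n - G.degree y) ≤ ∑ y ∈ Y, (n - G.degree y) :=
    Finset.sum_le_sum_of_subset (Finset.sdiff_subset)
  have hkey : a * (t + 1) ≤ m * (a + t + 1 - m) := by
    obtain ⟨c, hc⟩ : ∃ c, m = t + 1 + c := ⟨m - (t + 1), by omega⟩
    obtain ⟨d, hd⟩ : ∃ d, a = m + d := ⟨a - m, by omega⟩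
    have : a + t + 1 - m = d + t + 1 := by omega
    rw [this, hc, hd]
    nlinarith
  rw [hTcard] at hsum1
  omega

lemma count_bound {V : Type*} [Fintype V] [DecidableEq V] (G : SimpleGraph V)
    [DecidableRel G.Adj] (X Y : Finset V) (n a t : ℕ) (hX : X.card = n)
    (hsubY : ∀ y ∈ Y, G.neighborFinset y ⊆ X)
    (hcl : ∀ x ∈ X, ∀ y ∈ Y, ¬G.Adj x y →
      a + t + 1 ≤ (n - G.degree x) + (n - G.degree y))
    (y₁ : V) (hy₁ : y₁ ∈ Y) (hbig : a + 1 ≤ n - G.degree y₁)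
    (hnd : n - G.degree y₁ ≤ a + 2) :
    (X.filter (fun v => a + 1 ≤ n - G.degree v)).card * (a + 1)
      + (a + 1 - (X.filter (fun v => a + 1 ≤ n - G.degree v)).card) * (t - 1)
      ≤ ∑ x ∈ X, (n - G.degree x) := by
  classical
  set B := X.filter (fun v => a + 1 ≤ n - G.degree v) with hB
  set T := X \ G.neighborFinset y₁ with hT
  have hTX : T ⊆ X := Finset.sdiff_subset
  have hTcard : T.card = n - G.degree y₁ := by
    rw [hT, Finset.card_sdiff_of_subset (hsubY y₁ hy₁), SimpleGraph.card_neighborFinset_eq_degree, hX]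
  have hBX : B ⊆ X := Finset.filter_subset _ _
  have hdisjB : Disjoint B (T \ B) := Finset.disjoint_sdiff
  have hsub : B ∪ (T \ B) ⊆ X := Finset.union_subset hBX ((Finset.sdiff_subset).trans hTX)
  have h1 : ∑ x ∈ B ∪ (T \ B), (n - G.degree x) ≤ ∑ x ∈ X, (n - G.degree x) :=
    Finset.sum_le_sum_of_subset hsub
  rw [Finset.sum_union hdisjB] at h1
  have h2 : B.card * (a + 1) ≤ ∑ x ∈ B, (n - G.degree x) := by
    simpa [mul_comm] using Finset.card_nsmul_le_sum B (fun x => n - G.degree x) (a + 1)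
      (fun x hx => (Finset.mem_filter.mp hx).2)
  have h3 : (T \ B).card * (t - 1) ≤ ∑ x ∈ T \ B, (n - G.degree x) := by
    simpa [mul_comm] using Finset.card_nsmul_le_sum (T \ B) (fun x => n - G.degree x) (t - 1)
      (fun x hx => by
        have hxT : x ∈ T := (Finset.mem_sdiff.mp hx).1
        have hxX : x ∈ X := hTX hxT
        have hnadj : ¬G.Adj x y₁ := by
          intro hadj
          exact (Finset.mem_sdiff.mp hxT).2 ((G.mem_neighborFinset y₁ x).mpr hadj.symm)
        have := hcl x hxX y₁ hy₁ hnadj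
        show t - 1 ≤ n - G.degree x
        omega)
  have h4 : a + 1 - B.card ≤ (T \ B).card := by
    have := Finset.le_card_sdiff B T
    omega
  have h5 : (a + 1 - B.card) * (t - 1) ≤ (T \ B).card * (t - 1) :=
    Nat.mul_le_mul_right _ h4
  omega

set_option maxHeartbeats 400000000

/-- An `(n+p+2)`-closed balanced bipartite graph of order `2n` with
`δ(G) ≥ k ≥ p ≥ 0`, `n ≥ 2k − p + 2` and `e(G) > n(n−k+p−1) + (k+2)(k−p+1)` contains
`K_{n,n−k+p}` (with one side full), or `k = p + 2` and `G` is isomorphic to `N_{n,n}^{p,1}`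
or `N_{n,n}^{p,2}`. -/
theorem stmt10 {V : Type*} [Fintype V] [DecidableEq V] (n k p : ℕ)
    (G : SimpleGraph V) [DecidableRel G.Adj] (X Y : Finset V)
    (hdisj : Disjoint X Y) (hcov : X ∪ Y = Finset.univ)
    (hX : X.card = n) (hY : Y.card = n)
    (hbip : ∀ u v, G.Adj u v → (u ∈ X ∧ v ∈ Y) ∨ (u ∈ Y ∧ v ∈ X))
    (hkp : p ≤ k) (hn : 2 * k + 2 ≤ n + p)
    (hδ : ∀ v : V, k ≤ G.degree v)
    (hclosed : ∀ x ∈ X, ∀ y ∈ Y, ¬ G.Adj x y →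
      G.degree x + G.degree y < n + p + 2)
    (he : (n : ℤ) * ((n : ℤ) - k + p - 1) + ((k : ℤ) + 2) * ((k : ℤ) - p + 1)
        < (G.edgeFinset.card : ℤ)) :
    (∃ A B : Finset V, ((A = X ∧ B ⊆ Y) ∨ (A = Y ∧ B ⊆ X)) ∧ B.card + k = n + p ∧
      ∀ a ∈ A, ∀ b ∈ B, G.Adj a b) ∨
    (k = p + 2 ∧ (Nonempty (G ≃g Ngraph1 n p) ∨ Nonempty (G ≃g Ngraph2 n p))) := by
  classical
  obtain ⟨t, ht⟩ : ∃ t, k = p + t := ⟨k - p, by omega⟩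
  obtain ⟨a, ha⟩ : ∃ a, n = k + a + 2 := ⟨n - k - 2, by omega⟩
  have hta : t ≤ a := by omega
  -- neighbor sets
  have hsubX : ∀ x ∈ X, G.neighborFinset x ⊆ Y := by
    intro x hx v hv
    rw [SimpleGraph.mem_neighborFinset] at hv
    rcases hbip x v hv with ⟨_, h2⟩ | ⟨h1, _⟩
    · exact h2
    · exact absurd hx (Finset.disjoint_right.mp hdisj h1)
  have hsubY : ∀ y ∈ Y, G.neighborFinset y ⊆ X := by
    intro y hy v hv
    rw [SimpleGraph.mem_neighborFinset] at hv
    rcases hbip y v hv with ⟨h1, _⟩ | ⟨_, h2⟩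
    · exact absurd hy (Finset.disjoint_left.mp hdisj h1)
    · exact h2
  have hdegX : ∀ x ∈ X, G.degree x ≤ n := by
    intro x hx
    rw [← SimpleGraph.card_neighborFinset_eq_degree, ← hY]
    exact Finset.card_le_card (hsubX x hx)
  have hdegY : ∀ y ∈ Y, G.degree y ≤ n := by
    intro y hy
    rw [← SimpleGraph.card_neighborFinset_eq_degree, ← hX]
    exact Finset.card_le_card (hsubY y hy)
  -- degree as filter card
  have hdegfX : ∀ x ∈ X, G.degree x = (Y.filter (fun y => G.Adj x y)).card := by
    intro x hx
    rw [← SimpleGraph.card_neighborFinset_eq_degree]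
    congr 1
    ext v
    simp only [SimpleGraph.mem_neighborFinset, Finset.mem_filter]
    exact ⟨fun h => ⟨hsubX x hx ((G.mem_neighborFinset x v).mpr h), h⟩, fun h => h.2⟩
  have hdegfY : ∀ y ∈ Y, G.degree y = (X.filter (fun x => G.Adj x y)).card := by
    intro y hy
    rw [← SimpleGraph.card_neighborFinset_eq_degree]
    congr 1
    ext v
    simp only [SimpleGraph.mem_neighborFinset, Finset.mem_filter]
    constructor
    · intro h
      exact ⟨hsubY y hy ((G.mem_neighborFinset y v).mpr h), h.symm⟩
    · intro h; exact h.2.symm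
  -- equal degree sums on the two sides
  have hsumXY : ∑ x ∈ X, G.degree x = ∑ y ∈ Y, G.degree y := by
    rw [Finset.sum_congr rfl hdegfX, Finset.sum_congr rfl hdegfY]
    simp only [Finset.card_filter]
    rw [Finset.sum_comm]
  -- sum over X equals edge count
  have hedge : ∑ x ∈ X, G.degree x = G.edgeFinset.card := by
    have h2 := G.sum_degrees_eq_twice_card_edges
    have hsplit : ∑ v : V, G.degree v = ∑ x ∈ X, G.degree x + ∑ y ∈ Y, G.degree y := by
      rw [← Finset.sum_union hdisj, hcov]
    omega
  -- M : the number of non-edges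
  set M := ∑ x ∈ X, (n - G.degree x) with hMdef
  have hMX : M + ∑ x ∈ X, G.degree x = n * n := by
    have : ∀ x ∈ X, (n - G.degree x) + G.degree x = n := by
      intro x hx; have := hdegX x hx; omega
    rw [hMdef, ← Finset.sum_add_distrib, Finset.sum_congr rfl this, Finset.sum_const, hX,
      smul_eq_mul]
  have hMY : ∑ y ∈ Y, (n - G.degree y) = M := by
    have h1 : ∑ y ∈ Y, ((n - G.degree y) + G.degree y) = n * n := by
      have : ∀ y ∈ Y, (n - G.degree y) + G.degree y = n := by
        intro y hy; have := hdegY y hy; omega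
      rw [Finset.sum_congr rfl this, Finset.sum_const, hY, smul_eq_mul]
    rw [Finset.sum_add_distrib] at h1
    omega
  -- the key bound on M
  have hM : M < a * (t + 1) := by
    have hcast : (M : ℤ) + (G.edgeFinset.card : ℤ) = (n : ℤ) * n := by
      rw [← hedge]; exact_mod_cast congrArg (Nat.cast : ℕ → ℤ) hMX
    have hsub : (n : ℤ) * ((n : ℤ) - k + p - 1) + ((k : ℤ) + 2) * ((k : ℤ) - p + 1)
        = (n : ℤ) * n - (a : ℤ) * (t + 1) := by
      have h1 : (n : ℤ) = (k : ℤ) + a + 2 := by exact_mod_cast congrArg (Nat.cast : ℕ → ℤ) ha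
      have h2 : (k : ℤ) = (p : ℤ) + t := by exact_mod_cast congrArg (Nat.cast : ℕ → ℤ) ht
      rw [h1, h2]; ring
    have : (M : ℤ) < (a : ℤ) * (t + 1) := by omega
    exact_mod_cast this
  -- closedness in non-degree form
  have hcl : ∀ x ∈ X, ∀ y ∈ Y, ¬G.Adj x y →
      a + t + 1 ≤ (n - G.degree x) + (n - G.degree y) := by
    intro x hx y hy hnadj
    have h1 := hclosed x hx y hy hnadj
    have h2 := hdegX x hx
    have h3 := hdegY y hy
    omega
  have hcl' : ∀ y ∈ Y, ∀ x ∈ X, ¬G.Adj y x →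
      a + t + 1 ≤ (n - G.degree y) + (n - G.degree x) := by
    intro y hy x hx hnadj
    have := hcl x hx y hy (fun h => hnadj h.symm)
    omega

  -- non-degree bound from minimum degree
  have hnd_le : ∀ v : V, n - G.degree v ≤ a + 2 := fun v => by have := hδ v; omega
  -- Branch: few incomplete vertices on the Y side
  by_cases hWYc : (Y.filter (fun v => 1 ≤ n - G.degree v)).card ≤ t
  · left
    obtain ⟨B, hBY, hBcard, hadj⟩ := side_complete G X Y n t hX hY hsubY hWYc (by omega)
    exact ⟨X, B, Or.inl ⟨rfl, hBY⟩, by omega, hadj⟩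
  by_cases hWXc : (X.filter (fun v => 1 ≤ n - G.degree v)).card ≤ t
  · left
    obtain ⟨B, hBX, hBcard, hadj⟩ := side_complete G Y X n t hY hX hsubX hWXc (by omega)
    exact ⟨Y, B, Or.inr ⟨rfl, hBX⟩, by omega, hadj⟩
  push_neg at hWYc hWXc
  right
  set WX := X.filter (fun v => 1 ≤ n - G.degree v) with hWXdef
  set WY := Y.filter (fun v => 1 ≤ n - G.degree v) with hWYdef
  -- small-or-big dichotomy
  have hL1X : ∀ v ∈ X, (n - G.degree v ≤ t) ∨ (a + 1 ≤ n - G.degree v) :=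
    small_or_big G X Y n a t hY hsubX hcl (by rw [hMY]; exact hM)
  have hL1Y : ∀ v ∈ Y, (n - G.degree v ≤ t) ∨ (a + 1 ≤ n - G.degree v) :=
    small_or_big G Y X n a t hX hsubY hcl' hM
  -- every non-edge has a big endpoint
  have hbigedge : ∀ x ∈ X, ∀ y ∈ Y, ¬G.Adj x y →
      (a + 1 ≤ n - G.degree x ∨ a + 1 ≤ n - G.degree y) := by
    intro x hx y hy hnadj
    have h1 := hL1X x hx
    have h2 := hL1Y y hy
    have h3 := hcl x hx y hy hnadj
    omega
  -- a helper to extract a non-neighbour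
  have hnonnbrY : ∀ y ∈ Y, 1 ≤ n - G.degree y → ∃ x ∈ X, ¬G.Adj x y := by
    intro y hy h1
    have hcard : 1 ≤ (X \ G.neighborFinset y).card := by
      rw [Finset.card_sdiff_of_subset (hsubY y hy), SimpleGraph.card_neighborFinset_eq_degree, hX]
      exact h1
    obtain ⟨x, hx⟩ := Finset.card_pos.mp hcard
    rw [Finset.mem_sdiff] at hx
    exact ⟨x, hx.1, fun hadj => hx.2 ((G.mem_neighborFinset y x).mpr hadj.symm)⟩
  have hnonnbrX : ∀ x ∈ X, 1 ≤ n - G.degree x → ∃ y ∈ Y, ¬G.Adj x y := by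
    intro x hx h1
    have hcard : 1 ≤ (Y \ G.neighborFinset x).card := by
      rw [Finset.card_sdiff_of_subset (hsubX x hx), SimpleGraph.card_neighborFinset_eq_degree, hY]
      exact h1
    obtain ⟨y, hy⟩ := Finset.card_pos.mp hcard
    rw [Finset.mem_sdiff] at hy
    exact ⟨y, hy.1, fun hadj => hy.2 ((G.mem_neighborFinset x y).mpr hadj)⟩
  -- t ≥ 1
  have ht1 : 1 ≤ t := by
    by_contra ht0
    have ht0' : t = 0 := by omega
    rw [ht0'] at hM
    obtain ⟨y₀, hy₀⟩ := Finset.card_pos.mp (show 0 < WY.card by omega)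
    rw [hWYdef, Finset.mem_filter] at hy₀
    obtain ⟨x₀, hx₀, hnadj⟩ := hnonnbrY y₀ hy₀.1 hy₀.2
    rcases hbigedge x₀ hx₀ y₀ hy₀.1 hnadj with hbx | hby
    · have : n - G.degree x₀ ≤ M := by
        rw [hMdef]
        exact Finset.single_le_sum (f := fun v => n - G.degree v)
          (fun i _ => Nat.zero_le _) hx₀
      omega
    · have : n - G.degree y₀ ≤ ∑ y ∈ Y, (n - G.degree y) :=
        Finset.single_le_sum (f := fun v => n - G.degree v)
          (fun i _ => Nat.zero_le _) hy₀.1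
      omega
  -- big vertex sets
  set BX := X.filter (fun v => a + 1 ≤ n - G.degree v) with hBXdef
  set BY := Y.filter (fun v => a + 1 ≤ n - G.degree v) with hBYdef
  have hBXcard : BX.card ≤ t := by
    by_contra hq
    push_neg at hq
    have h1 : BX.card * (a + 1) ≤ ∑ x ∈ BX, (n - G.degree x) := by
      simpa [mul_comm] using Finset.card_nsmul_le_sum BX (fun x => n - G.degree x) (a + 1)
        (fun x hx => (Finset.mem_filter.mp hx).2)
    have h2 : ∑ x ∈ BX, (n - G.degree x) ≤ M :=
      Finset.sum_le_sum_of_subset (Finset.filter_subset _ _)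
    have h3 : (t + 1) * (a + 1) ≤ BX.card * (a + 1) := Nat.mul_le_mul_right _ (by omega)
    nlinarith
  have hBYcard : BY.card ≤ t := by
    by_contra hq
    push_neg at hq
    have h1 : BY.card * (a + 1) ≤ ∑ y ∈ BY, (n - G.degree y) := by
      simpa [mul_comm] using Finset.card_nsmul_le_sum BY (fun y => n - G.degree y) (a + 1)
        (fun y hy => (Finset.mem_filter.mp hy).2)
    have h2 : ∑ y ∈ BY, (n - G.degree y) ≤ ∑ y ∈ Y, (n - G.degree y) :=
      Finset.sum_le_sum_of_subset (Finset.filter_subset _ _)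
    have h3 : (t + 1) * (a + 1) ≤ BY.card * (a + 1) := Nat.mul_le_mul_right _ (by omega)
    rw [hMY] at h2
    nlinarith
  -- small incomplete vertices: all their non-neighbours are big
  have hsmallY : ∀ y ∈ Y, n - G.degree y ≤ t → ∀ x ∈ X, ¬G.Adj x y → x ∈ BX := by
    intro y hy hsm x hx hnadj
    rcases hbigedge x hx y hy hnadj with h | h
    · exact Finset.mem_filter.mpr ⟨hx, h⟩
    · omega
  have hsmallX : ∀ x ∈ X, n - G.degree x ≤ t → ∀ y ∈ Y, ¬G.Adj x y → y ∈ BY := by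
    intro x hx hsm y hy hnadj
    rcases hbigedge x hx y hy hnadj with h | h
    · omega
    · exact Finset.mem_filter.mpr ⟨hy, h⟩
  -- existence of a small incomplete vertex on each side, and consequences
  have hsmYex : ∃ y ∈ Y, 1 ≤ n - G.degree y ∧ n - G.degree y ≤ t ∧ y ∉ BY := by
    have hc : 0 < (WY \ BY).card := by
      have := Finset.le_card_sdiff BY WY
      omega
    obtain ⟨y, hy⟩ := Finset.card_pos.mp hc
    rw [Finset.mem_sdiff] at hy
    have hyf := Finset.mem_filter.mp hy.1
    refine ⟨y, hyf.1, hyf.2, ?_, hy.2⟩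
    rcases hL1Y y hyf.1 with h | h
    · exact h
    · exact absurd (Finset.mem_filter.mpr ⟨hyf.1, h⟩) hy.2
  have hsmXex : ∃ x ∈ X, 1 ≤ n - G.degree x ∧ n - G.degree x ≤ t ∧ x ∉ BX := by
    have hc : 0 < (WX \ BX).card := by
      have := Finset.le_card_sdiff BX WX
      omega
    obtain ⟨x, hx⟩ := Finset.card_pos.mp hc
    rw [Finset.mem_sdiff] at hx
    have hxf := Finset.mem_filter.mp hx.1
    refine ⟨x, hxf.1, hxf.2, ?_, hx.2⟩
    rcases hL1X x hxf.1 with h | h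
    · exact h
    · exact absurd (Finset.mem_filter.mpr ⟨hxf.1, h⟩) hx.2
  -- BX and BY are nonempty
  have hBXne : BX.Nonempty := by
    obtain ⟨y, hy, h1, h2, _⟩ := hsmYex
    obtain ⟨x, hx, hnadj⟩ := hnonnbrY y hy h1
    exact ⟨x, hsmallY y hy h2 x hx hnadj⟩
  have hBYne : BY.Nonempty := by
    obtain ⟨x, hx, h1, h2, _⟩ := hsmXex
    obtain ⟨y, hy, hnadj⟩ := hnonnbrX x hx h1
    exact ⟨y, hsmallX x hx h2 y hy hnadj⟩
  obtain ⟨x₁, hx₁⟩ := hBXne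
  obtain ⟨y₁, hy₁⟩ := hBYne
  have hx₁f := Finset.mem_filter.mp hx₁
  have hy₁f := Finset.mem_filter.mp hy₁
  -- the main counting bounds
  have hF6X : BX.card * (a + 1) + (a + 1 - BX.card) * (t - 1) ≤ M :=
    count_bound G X Y n a t hX hsubY hcl y₁ hy₁f.1 hy₁f.2 (hnd_le y₁)
  have hF6Y : BY.card * (a + 1) + (a + 1 - BY.card) * (t - 1) ≤ M := by
    rw [← hMY]
    exact count_bound G Y X n a t hY hsubX hcl' x₁ hx₁f.1 hx₁f.2 (hnd_le x₁)
  -- lower bounds on |BX|, |BY|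
  have hBXge : t ≤ BX.card + 1 := by
    obtain ⟨y, hy, h1, h2, _⟩ := hsmYex
    obtain ⟨x, hx, hnadj⟩ := hnonnbrY y hy h1
    -- non-neighbours of y are contained in BX
    have hsub2 : X \ G.neighborFinset y ⊆ BX := by
      intro x' hx'
      rw [Finset.mem_sdiff] at hx'
      have hnadj' : ¬G.Adj x' y := fun hadj =>
        hx'.2 ((G.mem_neighborFinset y x').mpr hadj.symm)
      exact hsmallY y hy h2 x' hx'.1 hnadj'
    have hcard2 : n - G.degree y ≤ BX.card := by
      have := Finset.card_le_card hsub2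
      rw [Finset.card_sdiff_of_subset (hsubY y hy), SimpleGraph.card_neighborFinset_eq_degree, hX] at this
      exact this
    have hxX := hsmallY y hy h2 x hx hnadj
    have hxbig := (Finset.mem_filter.mp hxX).2
    have := hcl x hx y hy hnadj
    have := hnd_le x
    omega
  have hBYge : t ≤ BY.card + 1 := by
    obtain ⟨x, hx, h1, h2, _⟩ := hsmXex
    obtain ⟨y, hy, hnadj⟩ := hnonnbrX x hx h1
    have hsub2 : Y \ G.neighborFinset x ⊆ BY := by
      intro y' hy'
      rw [Finset.mem_sdiff] at hy'
      have hnadj' : ¬G.Adj x y' := fun hadj =>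
        hy'.2 ((G.mem_neighborFinset x y').mpr hadj)
      exact hsmallX x hx h2 y' hy'.1 hnadj'
    have hcard2 : n - G.degree x ≤ BY.card := by
      have := Finset.card_le_card hsub2
      rw [Finset.card_sdiff_of_subset (hsubX x hx), SimpleGraph.card_neighborFinset_eq_degree, hY] at this
      exact this
    have hyY := hsmallX x hx h2 y hy hnadj
    have hybig := (Finset.mem_filter.mp hyY).2
    have := hcl x hx y hy hnadj
    have := hnd_le y
    omega
  -- t ≤ 2
  have ht2 : t ≤ 2 := by
    by_contra ht3
    push_neg at ht3
    obtain ⟨s, hs⟩ : ∃ s, t = s + 1 := ⟨t - 1, by omega⟩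
    obtain ⟨d, hd⟩ : ∃ d, a = s + 1 + d := ⟨a - s - 1, by omega⟩
    have hs2 : 2 ≤ s := by omega
    have hMlt : M < (s + 1 + d) * (s + 2) := by
      rw [hd, hs] at hM
      exact hM
    have hq : BX.card = s ∨ BX.card = s + 1 := by omega
    rcases hq with hq | hq
    · have h6 : s * (s + 1 + d + 1) + (d + 2) * s ≤ M := by
        have h7 : a + 1 - BX.card = d + 2 := by omega
        rw [h7, hq, hs, hd] at hF6X
        simpa using hF6X
      nlinarith [hMlt, h6]
    · have h6 : (s + 1) * (s + 1 + d + 1) + (d + 1) * s ≤ M := by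
        have h7 : a + 1 - BX.card = d + 1 := by omega
        rw [h7, hq, hs, hd] at hF6X
        simpa using hF6X
      nlinarith [hMlt, h6]
  -- t = 1 leads to a contradiction
  have htne1 : t ≠ 1 := by
    intro ht1'
    -- BX = {x*}, BY = {y*}
    have hBX1 : BX.card = 1 := by
      have := Finset.card_pos.mpr ⟨x₁, hx₁⟩
      omega
    have hBY1 : BY.card = 1 := by
      have := Finset.card_pos.mpr ⟨y₁, hy₁⟩
      omega
    obtain ⟨xs, hxs⟩ := Finset.card_eq_one.mp hBX1
    obtain ⟨ys, hys⟩ := Finset.card_eq_one.mp hBY1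
    have hxsX : xs ∈ X := by
      have : xs ∈ BX := hxs ▸ Finset.mem_singleton_self xs
      exact (Finset.mem_filter.mp this).1
    have hxsbig : a + 1 ≤ n - G.degree xs := by
      have : xs ∈ BX := hxs ▸ Finset.mem_singleton_self xs
      exact (Finset.mem_filter.mp this).2
    have hysY : ys ∈ Y := by
      have : ys ∈ BY := hys ▸ Finset.mem_singleton_self ys
      exact (Finset.mem_filter.mp this).1
    have hysbig : a + 1 ≤ n - G.degree ys := by
      have : ys ∈ BY := hys ▸ Finset.mem_singleton_self ys
      exact (Finset.mem_filter.mp this).2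
    -- non-neighbours of xs form a subset of WY of size ≥ a+1
    have hTsub : Y \ G.neighborFinset xs ⊆ WY := by
      intro y hy
      rw [Finset.mem_sdiff] at hy
      refine Finset.mem_filter.mpr ⟨hy.1, ?_⟩
      have hxsnb : xs ∈ X \ G.neighborFinset y := by
        rw [Finset.mem_sdiff]
        refine ⟨hxsX, fun hmem => ?_⟩
        have : G.Adj y xs := (G.mem_neighborFinset y xs).mp hmem
        exact hy.2 ((G.mem_neighborFinset xs y).mpr this.symm)
      have h1 : 0 < (X \ G.neighborFinset y).card := Finset.card_pos.mpr ⟨xs, hxsnb⟩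
      rw [Finset.card_sdiff_of_subset (hsubY y hy.1), SimpleGraph.card_neighborFinset_eq_degree, hX] at h1
      omega
    have hWYbig : a + 1 ≤ WY.card := by
      have h1 := Finset.card_le_card hTsub
      rw [Finset.card_sdiff_of_subset (hsubX xs hxsX), SimpleGraph.card_neighborFinset_eq_degree, hY] at h1
      omega
    have hysWY : ys ∈ WY := Finset.mem_filter.mpr ⟨hysY, by omega⟩
    have hsum : ∑ y ∈ WY, (n - G.degree y) ≤ M := by
      rw [← hMY]
      exact Finset.sum_le_sum_of_subset (Finset.filter_subset _ _)
    have hsplit : (n - G.degree ys) + ∑ y ∈ WY.erase ys, (n - G.degree y)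
        = ∑ y ∈ WY, (n - G.degree y) :=
      Finset.add_sum_erase WY (fun y => n - G.degree y) hysWY
    have herase : (WY.erase ys).card ≤ ∑ y ∈ WY.erase ys, (n - G.degree y) := by
      simpa using Finset.card_nsmul_le_sum (WY.erase ys) (fun y => n - G.degree y) 1
        (fun y hy => (Finset.mem_filter.mp (Finset.erase_subset _ _ hy)).2)
    have hecard : (WY.erase ys).card = WY.card - 1 := Finset.card_erase_of_mem hysWY
    have hMfinal : 2 * a + 1 ≤ M := by omega
    rw [ht1'] at hM
    omega
  have ht2'' : t = 2 := by omega
  -- BX and BY are singletons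
  have hBX1 : BX.card = 1 := by
    by_contra hne
    have h2 : BX.card = 2 := by
      have := Finset.card_pos.mpr ⟨x₁, hx₁⟩
      omega
    rw [h2, ht2''] at hF6X
    rw [ht2''] at hM
    omega
  have hBY1 : BY.card = 1 := by
    by_contra hne
    have h2 : BY.card = 2 := by
      have := Finset.card_pos.mpr ⟨y₁, hy₁⟩
      omega
    rw [h2, ht2''] at hF6Y
    rw [ht2''] at hM
    omega
  obtain ⟨xs, hxs⟩ := Finset.card_eq_one.mp hBX1
  obtain ⟨ys, hys⟩ := Finset.card_eq_one.mp hBY1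
  have hxsBX : xs ∈ BX := hxs ▸ Finset.mem_singleton_self xs
  have hysBY : ys ∈ BY := hys ▸ Finset.mem_singleton_self ys
  have hxsX : xs ∈ X := (Finset.mem_filter.mp hxsBX).1
  have hysY : ys ∈ Y := (Finset.mem_filter.mp hysBY).1
  -- the special vertices have non-degree exactly a+2
  have hndxs : n - G.degree xs = a + 2 := by
    obtain ⟨y, hy, h1, h2, _⟩ := hsmYex
    -- non-neighbours of y lie in BX = {xs}
    have hsub2 : X \ G.neighborFinset y ⊆ BX := by
      intro x' hx'
      rw [Finset.mem_sdiff] at hx'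
      exact hsmallY y hy h2 x' hx'.1
        (fun hadj => hx'.2 ((G.mem_neighborFinset y x').mpr hadj.symm))
    have hnd1 : n - G.degree y = 1 := by
      have hc := Finset.card_le_card hsub2
      rw [Finset.card_sdiff_of_subset (hsubY y hy), SimpleGraph.card_neighborFinset_eq_degree, hX,
        hBX1] at hc
      omega
    obtain ⟨x', hx', hnadj⟩ := hnonnbrY y hy h1
    have hx'BX : x' ∈ BX := hsmallY y hy h2 x' hx' hnadj
    have hx'eq : x' = xs := by rw [hxs] at hx'BX; exact Finset.mem_singleton.mp hx'BX
    have := hcl xs hxsX y hy (hx'eq ▸ hnadj)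
    have := hnd_le xs
    omega
  have hndys : n - G.degree ys = a + 2 := by
    obtain ⟨x, hx, h1, h2, _⟩ := hsmXex
    have hsub2 : Y \ G.neighborFinset x ⊆ BY := by
      intro y' hy'
      rw [Finset.mem_sdiff] at hy'
      exact hsmallX x hx h2 y' hy'.1
        (fun hadj => hy'.2 ((G.mem_neighborFinset x y').mpr hadj))
    have hnd1 : n - G.degree x = 1 := by
      have hc := Finset.card_le_card hsub2
      rw [Finset.card_sdiff_of_subset (hsubX x hx), SimpleGraph.card_neighborFinset_eq_degree, hY,
        hBY1] at hc
      omega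
    obtain ⟨y', hy', hnadj⟩ := hnonnbrX x hx h1
    have hy'BY : y' ∈ BY := hsmallX x hx h2 y' hy' hnadj
    have hy'eq : y' = ys := by rw [hys] at hy'BY; exact Finset.mem_singleton.mp hy'BY
    have := hcl x hx ys hysY (hy'eq ▸ hnadj)
    have := hnd_le ys
    omega
  -- the two "private" blocks
  set SX := X \ G.neighborFinset ys with hSXdef
  set SY := Y \ G.neighborFinset xs with hSYdef
  have hSXsub : SX ⊆ X := Finset.sdiff_subset
  have hSYsub : SY ⊆ Y := Finset.sdiff_subset
  have hSXcard : SX.card = a + 2 := by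
    rw [hSXdef, Finset.card_sdiff_of_subset (hsubY ys hysY),
      SimpleGraph.card_neighborFinset_eq_degree, hX]
    exact hndys
  have hSYcard : SY.card = a + 2 := by
    rw [hSYdef, Finset.card_sdiff_of_subset (hsubX xs hxsX),
      SimpleGraph.card_neighborFinset_eq_degree, hY]
    exact hndxs
  have hmemSX : ∀ x, x ∈ SX ↔ (x ∈ X ∧ ¬G.Adj x ys) := by
    intro x
    rw [hSXdef, Finset.mem_sdiff]
    constructor
    · rintro ⟨h1, h2⟩
      exact ⟨h1, fun hadj => h2 ((G.mem_neighborFinset ys x).mpr hadj.symm)⟩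
    · rintro ⟨h1, h2⟩
      exact ⟨h1, fun hm => h2 ((G.mem_neighborFinset ys x).mp hm).symm⟩
  have hmemSY : ∀ y, y ∈ SY ↔ (y ∈ Y ∧ ¬G.Adj xs y) := by
    intro y
    rw [hSYdef, Finset.mem_sdiff]
    constructor
    · rintro ⟨h1, h2⟩
      exact ⟨h1, fun hadj => h2 ((G.mem_neighborFinset xs y).mpr hadj)⟩
    · rintro ⟨h1, h2⟩
      exact ⟨h1, fun hm => h2 ((G.mem_neighborFinset xs y).mp hm)⟩
  -- full characterization of non-adjacency
  have hchar : ∀ x ∈ X, ∀ y ∈ Y,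
      (¬G.Adj x y ↔ ((x = xs ∧ y ∈ SY) ∨ (x ∈ SX ∧ y = ys))) := by
    intro x hx y hy
    constructor
    · intro hnadj
      rcases hbigedge x hx y hy hnadj with hb | hb
      · have hxBX : x ∈ BX := Finset.mem_filter.mpr ⟨hx, hb⟩
        have hxeq : x = xs := by rw [hxs] at hxBX; exact Finset.mem_singleton.mp hxBX
        exact Or.inl ⟨hxeq, (hmemSY y).mpr ⟨hy, hxeq ▸ hnadj⟩⟩
      · have hyBY : y ∈ BY := Finset.mem_filter.mpr ⟨hy, hb⟩
        have hyeq : y = ys := by rw [hys] at hyBY; exact Finset.mem_singleton.mp hyBY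
        exact Or.inr ⟨(hmemSX x).mpr ⟨hx, hyeq ▸ hnadj⟩, hyeq⟩
    · rintro (⟨hxeq, hySY⟩ | ⟨hxSX, hyeq⟩)
      · exact hxeq ▸ ((hmemSY y).mp hySY).2
      · exact hyeq ▸ ((hmemSX x).mp hxSX).2
  -- basic facts for building the equivalence
  have hmemY' : ∀ v : V, v ∉ X → v ∈ Y := by
    intro v hv
    have hvu : v ∈ X ∪ Y := by rw [hcov]; exact Finset.mem_univ v
    rcases Finset.mem_union.mp hvu with h | h
    · exact absurd h hv
    · exact h
  have hXnotY : ∀ v : V, v ∈ X → v ∉ Y := fun v hv => Finset.disjoint_left.mp hdisj hv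
  have hcardV : Fintype.card V = n + n := by
    rw [← Finset.card_univ, ← hcov, Finset.card_union_of_disjoint hdisj, hX, hY]
  refine ⟨by omega, ?_⟩
  by_cases hadjs : G.Adj xs ys
  -- ============ CASE 1 : N^{p,1} ============
  · left
    have hxsSX : xs ∉ SX := fun hmem => ((hmemSX xs).mp hmem).2 hadjs
    have hysSY : ys ∉ SY := fun hmem => ((hmemSY ys).mp hmem).2 hadjs
    -- block partition of X
    have hc1X : SX.card = n - p - 2 := by omega
    have hc3X : ({xs} : Finset V).card = 1 := Finset.card_singleton xs
    have hsubUX : SX ∪ {xs} ⊆ X := Finset.union_subset hSXsub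
      (Finset.singleton_subset_iff.mpr hxsX)
    have hcUX : (SX ∪ {xs}).card = a + 3 := by
      rw [Finset.card_union_of_disjoint (Finset.disjoint_singleton_right.mpr hxsSX),
        hSXcard, hc3X]
    have hc2X : (X \ (SX ∪ {xs})).card = p + 1 := by
      rw [Finset.card_sdiff_of_subset hsubUX, hX, hcUX]
      omega
    have hd13X : Disjoint SX ({xs} : Finset V) := Finset.disjoint_singleton_right.mpr hxsSX
    have hd23X : Disjoint (X \ (SX ∪ {xs})) ({xs} : Finset V) :=
      Finset.disjoint_singleton_right.mpr (fun hmem =>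
        (Finset.mem_sdiff.mp hmem).2 (Finset.mem_union_right _ (Finset.mem_singleton_self xs)))
    have hd12X : Disjoint SX (X \ (SX ∪ {xs})) := Finset.disjoint_left.mpr
      (fun hv hv1 hv2 => (Finset.mem_sdiff.mp hv2).2 (Finset.mem_union_left _ hv1))
    have huX : SX ∪ (X \ (SX ∪ {xs})) ∪ {xs} = X := by
      ext v
      simp only [Finset.mem_union, Finset.mem_sdiff, Finset.mem_singleton]
      constructor
      · rintro ((h | ⟨h, _⟩) | h)
        · exact hSXsub h
        · exact h
        · exact h ▸ hxsX
      · intro hv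
        by_cases h1 : v ∈ SX
        · exact Or.inl (Or.inl h1)
        · by_cases h2 : v = xs
          · exact Or.inr h2
          · exact Or.inl (Or.inr ⟨hv, fun hh => by
              rcases hh with hh1 | hh2
              · exact h1 hh1
              · exact h2 hh2⟩)
    obtain ⟨gX0, hgX0⟩ := blockEquiv X SX (X \ (SX ∪ {xs})) {xs} (n - p - 2) (p + 1) 1
      hd13X hd23X hd12X huX hc1X hc2X hc3X
    -- block partition of Y
    have hc1Y : SY.card = n - p - 2 := by omega
    have hc3Y : ({ys} : Finset V).card = 1 := Finset.card_singleton ys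
    have hsubUY : SY ∪ {ys} ⊆ Y := Finset.union_subset hSYsub
      (Finset.singleton_subset_iff.mpr hysY)
    have hcUY : (SY ∪ {ys}).card = a + 3 := by
      rw [Finset.card_union_of_disjoint (Finset.disjoint_singleton_right.mpr hysSY),
        hSYcard, hc3Y]
    have hc2Y : (Y \ (SY ∪ {ys})).card = p + 1 := by
      rw [Finset.card_sdiff_of_subset hsubUY, hY, hcUY]
      omega
    have hd13Y : Disjoint SY ({ys} : Finset V) := Finset.disjoint_singleton_right.mpr hysSY
    have hd23Y : Disjoint (Y \ (SY ∪ {ys})) ({ys} : Finset V) :=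
      Finset.disjoint_singleton_right.mpr (fun hmem =>
        (Finset.mem_sdiff.mp hmem).2 (Finset.mem_union_right _ (Finset.mem_singleton_self ys)))
    have hd12Y : Disjoint SY (Y \ (SY ∪ {ys})) := Finset.disjoint_left.mpr
      (fun hv hv1 hv2 => (Finset.mem_sdiff.mp hv2).2 (Finset.mem_union_left _ hv1))
    have huY : SY ∪ (Y \ (SY ∪ {ys})) ∪ {ys} = Y := by
      ext v
      simp only [Finset.mem_union, Finset.mem_sdiff, Finset.mem_singleton]
      constructor
      · rintro ((h | ⟨h, _⟩) | h)
        · exact hSYsub h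
        · exact h
        · exact h ▸ hysY
      · intro hv
        by_cases h1 : v ∈ SY
        · exact Or.inl (Or.inl h1)
        · by_cases h2 : v = ys
          · exact Or.inr h2
          · exact Or.inl (Or.inr ⟨hv, fun hh => by
              rcases hh with hh1 | hh2
              · exact h1 hh1
              · exact h2 hh2⟩)
    obtain ⟨gY0, hgY0⟩ := blockEquiv Y SY (Y \ (SY ∪ {ys})) {ys} (n - p - 2) (p + 1) 1
      hd13Y hd23Y hd12Y huY hc1Y hc2Y hc3Y
    have hceq : (n - p - 2) + (p + 1) + 1 = n := by omega
    set gX : {v // v ∈ X} ≃ Fin n := gX0.trans (finCongr hceq) with hgXdef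
    set gY : {v // v ∈ Y} ≃ Fin n := gY0.trans (finCongr hceq) with hgYdef
    have hgXval : ∀ z : {v // v ∈ X}, ((gX z : Fin n) : ℕ) = ((gX0 z : Fin _) : ℕ) := fun z => rfl
    have hgYval : ∀ z : {v // v ∈ Y}, ((gY z : Fin n) : ℕ) = ((gY0 z : Fin _) : ℕ) := fun z => rfl
    -- the underlying equivalence
    set f : V → Fin n ⊕ Fin n := fun v =>
      if h : v ∈ X then Sum.inl (gX ⟨v, h⟩) else Sum.inr (gY ⟨v, hmemY' v h⟩) with hfdef
    have hfX : ∀ (v : V) (h : v ∈ X), f v = Sum.inl (gX ⟨v, h⟩) := fun v h => dif_pos h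
    have hfY : ∀ (v : V) (h : v ∉ X), f v = Sum.inr (gY ⟨v, hmemY' v h⟩) :=
      fun v h => dif_neg h
    have hinj : Function.Injective f := by
      intro u v huv
      by_cases hu : u ∈ X <;> by_cases hv : v ∈ X
      · rw [hfX u hu, hfX v hv] at huv
        have := gX.injective (Sum.inl.inj huv)
        exact congrArg Subtype.val this
      · rw [hfX u hu, hfY v hv] at huv
        exact absurd huv (by simp)
      · rw [hfY u hu, hfX v hv] at huv
        exact absurd huv (by simp)
      · rw [hfY u hu, hfY v hv] at huv
        have := gY.injective (Sum.inr.inj huv)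
        exact congrArg Subtype.val this
    have hbij : Function.Bijective f := by
      rw [Fintype.bijective_iff_injective_and_card]
      exact ⟨hinj, by simp [hcardV]⟩
    set e : V ≃ (Fin n ⊕ Fin n) := Equiv.ofBijective f hbij with hedef
    -- class value facts
    have hclsX : ∀ (v : V) (hv : v ∈ X),
        (nClass (n - p - 2) (p + 1) ((gX ⟨v, hv⟩ : Fin n) : ℕ) = 1 ↔ v ∈ SX) ∧
        (nClass (n - p - 2) (p + 1) ((gX ⟨v, hv⟩ : Fin n) : ℕ) = 3 ↔ v = xs) := by
      intro v hv
      obtain ⟨hp1, hp3⟩ := hgX0 ⟨v, hv⟩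
      rw [hgXval ⟨v, hv⟩]
      constructor
      · rw [nClass_eq1]
        exact ⟨fun h => hp1.mpr h, fun h => hp1.mp h⟩
      · rw [nClass_eq3]
        constructor
        · intro h
          exact Finset.mem_singleton.mp (hp3.mpr h)
        · intro h
          exact hp3.mp (h ▸ Finset.mem_singleton_self xs)
    have hclsY : ∀ (v : V) (hv : v ∈ Y),
        (nClass (n - p - 2) (p + 1) ((gY ⟨v, hv⟩ : Fin n) : ℕ) = 1 ↔ v ∈ SY) ∧
        (nClass (n - p - 2) (p + 1) ((gY ⟨v, hv⟩ : Fin n) : ℕ) = 3 ↔ v = ys) := by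
      intro v hv
      obtain ⟨hp1, hp3⟩ := hgY0 ⟨v, hv⟩
      rw [hgYval ⟨v, hv⟩]
      constructor
      · rw [nClass_eq1]
        exact ⟨fun h => hp1.mpr h, fun h => hp1.mp h⟩
      · rw [nClass_eq3]
        constructor
        · intro h
          exact Finset.mem_singleton.mp (hp3.mpr h)
        · intro h
          exact hp3.mp (h ▸ Finset.mem_singleton_self ys)
    -- the cross adjacency equivalence
    have hcross : ∀ (u : V) (hu : u ∈ X) (v : V) (hv : v ∈ Y),
        ((Ngraph1 n p).Adj (Sum.inl (gX ⟨u, hu⟩)) (Sum.inr (gY ⟨v, hv⟩)) ↔ G.Adj u v) := by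
      intro u hu v hv
      have hN : (Ngraph1 n p).Adj (Sum.inl (gX ⟨u, hu⟩)) (Sum.inr (gY ⟨v, hv⟩)) ↔
          (¬(nClass (n - p - 2) (p + 1) ((gX ⟨u, hu⟩ : Fin n) : ℕ) = 1 ∧
             nClass (n - p - 2) (p + 1) ((gY ⟨v, hv⟩ : Fin n) : ℕ) = 3) ∧
           ¬(nClass (n - p - 2) (p + 1) ((gX ⟨u, hu⟩ : Fin n) : ℕ) = 3 ∧
             nClass (n - p - 2) (p + 1) ((gY ⟨v, hv⟩ : Fin n) : ℕ) = 1)) := Iff.rfl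
      rw [hN]
      obtain ⟨hu1, hu3⟩ := hclsX u hu
      obtain ⟨hv1, hv3⟩ := hclsY v hv
      have hGiff : G.Adj u v ↔ ¬((u = xs ∧ v ∈ SY) ∨ (u ∈ SX ∧ v = ys)) := by
        rw [← hchar u hu v hv]
        exact (not_not).symm
      rw [hGiff, hu1, hu3, hv1, hv3, not_or]
      exact and_comm
    refine ⟨⟨e, ?_⟩⟩
    intro u v
    by_cases hu : u ∈ X <;> by_cases hv : v ∈ X
    · have h1 : e u = Sum.inl (gX ⟨u, hu⟩) := hfX u hu
      have h2 : e v = Sum.inl (gX ⟨v, hv⟩) := hfX v hv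
      rw [h1, h2]
      exact iff_of_false (fun h => h) (fun hadj => by
        rcases hbip u v hadj with ⟨_, h2'⟩ | ⟨h1', _⟩
        · exact hXnotY v hv h2'
        · exact hXnotY u hu h1')
    · have hvY := hmemY' v hv
      have h1 : e u = Sum.inl (gX ⟨u, hu⟩) := hfX u hu
      have h2 : e v = Sum.inr (gY ⟨v, hmemY' v hv⟩) := hfY v hv
      rw [h1, h2]
      exact hcross u hu v hvY
    · have huY := hmemY' u hu
      have h1 : e u = Sum.inr (gY ⟨u, hmemY' u hu⟩) := hfY u hu
      have h2 : e v = Sum.inl (gX ⟨v, hv⟩) := hfX v hv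
      rw [h1, h2]
      have hN : (Ngraph1 n p).Adj (Sum.inr (gY ⟨u, hmemY' u hu⟩)) (Sum.inl (gX ⟨v, hv⟩)) ↔
          (Ngraph1 n p).Adj (Sum.inl (gX ⟨v, hv⟩)) (Sum.inr (gY ⟨u, hmemY' u hu⟩)) := Iff.rfl
      rw [hN, hcross v hv u huY]
      exact G.adj_comm v u
    · have huY := hmemY' u hu
      have hvY := hmemY' v hv
      have h1 : e u = Sum.inr (gY ⟨u, hmemY' u hu⟩) := hfY u hu
      have h2 : e v = Sum.inr (gY ⟨v, hmemY' v hv⟩) := hfY v hv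
      rw [h1, h2]
      exact iff_of_false (fun h => h) (fun hadj => by
        rcases hbip u v hadj with ⟨h1', _⟩ | ⟨_, h2'⟩
        · exact hXnotY u h1' huY
        · exact hXnotY v h2' hvY)
  -- ============ CASE 2 : N^{p,2} ============
  · right
    have hxsSX : xs ∈ SX := (hmemSX xs).mpr ⟨hxsX, hadjs⟩
    have hysSY : ys ∈ SY := (hmemSY ys).mpr ⟨hysY,
      fun h => hadjs h⟩
    -- block partition of X
    have hc1X : (SX.erase xs).card = n - p - 3 := by
      rw [Finset.card_erase_of_mem hxsSX, hSXcard]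
      omega
    have hc3X : ({xs} : Finset V).card = 1 := Finset.card_singleton xs
    have hc2X : (X \ SX).card = p + 2 := by
      rw [Finset.card_sdiff_of_subset hSXsub, hX, hSXcard]
      omega
    have hd13X : Disjoint (SX.erase xs) ({xs} : Finset V) :=
      Finset.disjoint_singleton_right.mpr (Finset.notMem_erase xs SX)
    have hd23X : Disjoint (X \ SX) ({xs} : Finset V) :=
      Finset.disjoint_singleton_right.mpr (fun hmem => (Finset.mem_sdiff.mp hmem).2 hxsSX)
    have hd12X : Disjoint (SX.erase xs) (X \ SX) := Finset.disjoint_left.mpr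
      (fun hv hv1 hv2 => (Finset.mem_sdiff.mp hv2).2 (Finset.mem_of_mem_erase hv1))
    have huX : SX.erase xs ∪ (X \ SX) ∪ {xs} = X := by
      ext v
      simp only [Finset.mem_union, Finset.mem_sdiff, Finset.mem_singleton, Finset.mem_erase]
      constructor
      · rintro ((⟨_, h⟩ | ⟨h, _⟩) | h)
        · exact hSXsub h
        · exact h
        · exact h ▸ hxsX
      · intro hv
        by_cases h2 : v = xs
        · exact Or.inr h2
        · by_cases h1 : v ∈ SX
          · exact Or.inl (Or.inl ⟨h2, h1⟩)
          · exact Or.inl (Or.inr ⟨hv, h1⟩)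
    obtain ⟨gX0, hgX0⟩ := blockEquiv X (SX.erase xs) (X \ SX) {xs} (n - p - 3) (p + 2) 1
      hd13X hd23X hd12X huX hc1X hc2X hc3X
    -- block partition of Y
    have hc1Y : (SY.erase ys).card = n - p - 3 := by
      rw [Finset.card_erase_of_mem hysSY, hSYcard]
      omega
    have hc3Y : ({ys} : Finset V).card = 1 := Finset.card_singleton ys
    have hc2Y : (Y \ SY).card = p + 2 := by
      rw [Finset.card_sdiff_of_subset hSYsub, hY, hSYcard]
      omega
    have hd13Y : Disjoint (SY.erase ys) ({ys} : Finset V) :=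
      Finset.disjoint_singleton_right.mpr (Finset.notMem_erase ys SY)
    have hd23Y : Disjoint (Y \ SY) ({ys} : Finset V) :=
      Finset.disjoint_singleton_right.mpr (fun hmem => (Finset.mem_sdiff.mp hmem).2 hysSY)
    have hd12Y : Disjoint (SY.erase ys) (Y \ SY) := Finset.disjoint_left.mpr
      (fun hv hv1 hv2 => (Finset.mem_sdiff.mp hv2).2 (Finset.mem_of_mem_erase hv1))
    have huY : SY.erase ys ∪ (Y \ SY) ∪ {ys} = Y := by
      ext v
      simp only [Finset.mem_union, Finset.mem_sdiff, Finset.mem_singleton, Finset.mem_erase]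
      constructor
      · rintro ((⟨_, h⟩ | ⟨h, _⟩) | h)
        · exact hSYsub h
        · exact h
        · exact h ▸ hysY
      · intro hv
        by_cases h2 : v = ys
        · exact Or.inr h2
        · by_cases h1 : v ∈ SY
          · exact Or.inl (Or.inl ⟨h2, h1⟩)
          · exact Or.inl (Or.inr ⟨hv, h1⟩)
    obtain ⟨gY0, hgY0⟩ := blockEquiv Y (SY.erase ys) (Y \ SY) {ys} (n - p - 3) (p + 2) 1
      hd13Y hd23Y hd12Y huY hc1Y hc2Y hc3Y
    have hceq : (n - p - 3) + (p + 2) + 1 = n := by omega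
    set gX : {v // v ∈ X} ≃ Fin n := gX0.trans (finCongr hceq) with hgXdef
    set gY : {v // v ∈ Y} ≃ Fin n := gY0.trans (finCongr hceq) with hgYdef
    have hgXval : ∀ z : {v // v ∈ X}, ((gX z : Fin n) : ℕ) = ((gX0 z : Fin _) : ℕ) := fun z => rfl
    have hgYval : ∀ z : {v // v ∈ Y}, ((gY z : Fin n) : ℕ) = ((gY0 z : Fin _) : ℕ) := fun z => rfl
    set f : V → Fin n ⊕ Fin n := fun v =>
      if h : v ∈ X then Sum.inl (gX ⟨v, h⟩) else Sum.inr (gY ⟨v, hmemY' v h⟩) with hfdef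
    have hfX : ∀ (v : V) (h : v ∈ X), f v = Sum.inl (gX ⟨v, h⟩) := fun v h => dif_pos h
    have hfY : ∀ (v : V) (h : v ∉ X), f v = Sum.inr (gY ⟨v, hmemY' v h⟩) :=
      fun v h => dif_neg h
    have hinj : Function.Injective f := by
      intro u v huv
      by_cases hu : u ∈ X <;> by_cases hv : v ∈ X
      · rw [hfX u hu, hfX v hv] at huv
        have := gX.injective (Sum.inl.inj huv)
        exact congrArg Subtype.val this
      · rw [hfX u hu, hfY v hv] at huv
        exact absurd huv (by simp)
      · rw [hfY u hu, hfX v hv] at huv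
        exact absurd huv (by simp)
      · rw [hfY u hu, hfY v hv] at huv
        have := gY.injective (Sum.inr.inj huv)
        exact congrArg Subtype.val this
    have hbij : Function.Bijective f := by
      rw [Fintype.bijective_iff_injective_and_card]
      exact ⟨hinj, by simp [hcardV]⟩
    set e : V ≃ (Fin n ⊕ Fin n) := Equiv.ofBijective f hbij with hedef
    have hclsX : ∀ (v : V) (hv : v ∈ X),
        (nClass (n - p - 3) (p + 2) ((gX ⟨v, hv⟩ : Fin n) : ℕ) = 1 ↔ v ∈ SX.erase xs) ∧
        (nClass (n - p - 3) (p + 2) ((gX ⟨v, hv⟩ : Fin n) : ℕ) = 3 ↔ v = xs) := by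
      intro v hv
      obtain ⟨hp1, hp3⟩ := hgX0 ⟨v, hv⟩
      rw [hgXval ⟨v, hv⟩]
      constructor
      · rw [nClass_eq1]
        exact ⟨fun h => hp1.mpr h, fun h => hp1.mp h⟩
      · rw [nClass_eq3]
        constructor
        · intro h
          exact Finset.mem_singleton.mp (hp3.mpr h)
        · intro h
          exact hp3.mp (h ▸ Finset.mem_singleton_self xs)
    have hclsY : ∀ (v : V) (hv : v ∈ Y),
        (nClass (n - p - 3) (p + 2) ((gY ⟨v, hv⟩ : Fin n) : ℕ) = 1 ↔ v ∈ SY.erase ys) ∧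
        (nClass (n - p - 3) (p + 2) ((gY ⟨v, hv⟩ : Fin n) : ℕ) = 3 ↔ v = ys) := by
      intro v hv
      obtain ⟨hp1, hp3⟩ := hgY0 ⟨v, hv⟩
      rw [hgYval ⟨v, hv⟩]
      constructor
      · rw [nClass_eq1]
        exact ⟨fun h => hp1.mpr h, fun h => hp1.mp h⟩
      · rw [nClass_eq3]
        constructor
        · intro h
          exact Finset.mem_singleton.mp (hp3.mpr h)
        · intro h
          exact hp3.mp (h ▸ Finset.mem_singleton_self ys)
    have hcross : ∀ (u : V) (hu : u ∈ X) (v : V) (hv : v ∈ Y),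
        ((Ngraph2 n p).Adj (Sum.inl (gX ⟨u, hu⟩)) (Sum.inr (gY ⟨v, hv⟩)) ↔ G.Adj u v) := by
      intro u hu v hv
      have hN : (Ngraph2 n p).Adj (Sum.inl (gX ⟨u, hu⟩)) (Sum.inr (gY ⟨v, hv⟩)) ↔
          (¬(nClass (n - p - 3) (p + 2) ((gX ⟨u, hu⟩ : Fin n) : ℕ) = 1 ∧
             nClass (n - p - 3) (p + 2) ((gY ⟨v, hv⟩ : Fin n) : ℕ) = 3) ∧
           ¬(nClass (n - p - 3) (p + 2) ((gX ⟨u, hu⟩ : Fin n) : ℕ) = 3 ∧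
             nClass (n - p - 3) (p + 2) ((gY ⟨v, hv⟩ : Fin n) : ℕ) = 1) ∧
           ¬(nClass (n - p - 3) (p + 2) ((gX ⟨u, hu⟩ : Fin n) : ℕ) = 3 ∧
             nClass (n - p - 3) (p + 2) ((gY ⟨v, hv⟩ : Fin n) : ℕ) = 3)) := Iff.rfl
      rw [hN]
      obtain ⟨hu1, hu3⟩ := hclsX u hu
      obtain ⟨hv1, hv3⟩ := hclsY v hv
      have hGiff : G.Adj u v ↔ ¬((u = xs ∧ v ∈ SY) ∨ (u ∈ SX ∧ v = ys)) := by
        rw [← hchar u hu v hv]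
        exact (not_not).symm
      have huSX : u ∈ SX ↔ (u ∈ SX.erase xs ∨ u = xs) := by
        constructor
        · intro h
          by_cases hh : u = xs
          · exact Or.inr hh
          · exact Or.inl (Finset.mem_erase.mpr ⟨hh, h⟩)
        · rintro (h | h)
          · exact Finset.mem_of_mem_erase h
          · exact h ▸ hxsSX
      have hvSY : v ∈ SY ↔ (v ∈ SY.erase ys ∨ v = ys) := by
        constructor
        · intro h
          by_cases hh : v = ys
          · exact Or.inr hh
          · exact Or.inl (Finset.mem_erase.mpr ⟨hh, h⟩)
        · rintro (h | h)
          · exact Finset.mem_of_mem_erase h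
          · exact h ▸ hysSY
      rw [hGiff, hu1, hu3, hv1, hv3, huSX, hvSY]
      constructor
      · rintro ⟨h1, h2, h3⟩ (⟨hux, hv'⟩ | ⟨hu', hvy⟩)
        · rcases hv' with h | h
          · exact h2 ⟨hux, h⟩
          · exact h3 ⟨hux, h⟩
        · rcases hu' with h | h
          · exact h1 ⟨h, hvy⟩
          · exact h3 ⟨h, hvy⟩
      · intro hno
        refine ⟨?_, ?_, ?_⟩
        · rintro ⟨hb1, hb2⟩
          exact hno (Or.inr ⟨Or.inl hb1, hb2⟩)
        · rintro ⟨hb1, hb2⟩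
          exact hno (Or.inl ⟨hb1, Or.inl hb2⟩)
        · rintro ⟨hb1, hb2⟩
          exact hno (Or.inl ⟨hb1, Or.inr hb2⟩)
    refine ⟨⟨e, ?_⟩⟩
    intro u v
    by_cases hu : u ∈ X <;> by_cases hv : v ∈ X
    · have h1 : e u = Sum.inl (gX ⟨u, hu⟩) := hfX u hu
      have h2 : e v = Sum.inl (gX ⟨v, hv⟩) := hfX v hv
      rw [h1, h2]
      exact iff_of_false (fun h => h) (fun hadj => by
        rcases hbip u v hadj with ⟨_, h2'⟩ | ⟨h1', _⟩
        · exact hXnotY v hv h2'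
        · exact hXnotY u hu h1')
    · have hvY := hmemY' v hv
      have h1 : e u = Sum.inl (gX ⟨u, hu⟩) := hfX u hu
      have h2 : e v = Sum.inr (gY ⟨v, hmemY' v hv⟩) := hfY v hv
      rw [h1, h2]
      exact hcross u hu v hvY
    · have huY := hmemY' u hu
      have h1 : e u = Sum.inr (gY ⟨u, hmemY' u hu⟩) := hfY u hu
      have h2 : e v = Sum.inl (gX ⟨v, hv⟩) := hfX v hv
      rw [h1, h2]
      have hN : (Ngraph2 n p).Adj (Sum.inr (gY ⟨u, hmemY' u hu⟩)) (Sum.inl (gX ⟨v, hv⟩)) ↔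
          (Ngraph2 n p).Adj (Sum.inl (gX ⟨v, hv⟩)) (Sum.inr (gY ⟨u, hmemY' u hu⟩)) := Iff.rfl
      rw [hN, hcross v hv u huY]
      exact G.adj_comm v u
    · have huY := hmemY' u hu
      have hvY := hmemY' v hv
      have h1 : e u = Sum.inr (gY ⟨u, hmemY' u hu⟩) := hfY u hu
      have h2 : e v = Sum.inr (gY ⟨v, hmemY' v hv⟩) := hfY v hv
      rw [h1, h2]
      exact iff_of_false (fun h => h) (fun hadj => by
        rcases hbip u v hadj with ⟨h1', _⟩ | ⟨_, h2'⟩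
        · exact hXnotY u h1' huY
        · exact hXnotY v h2' hvY)
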